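/- Uniform decay of the image of compactly supported functions (the paper's estimates (2.5)–(2.6), Euclidean case): let N ≥ 1, 1 < p ≤ q < ∞, 0 < λ < N, α, β ∈ ℝ with β < N/p′ (p′ = p/(p−1)) and (α + λ) q > N. Then for every fixed R > 0, lim_{M → ∞} sup_{f ∈ L^p(ℝ^N), ‖f‖_{L^p} ≤ 1} ‖S(f χ_{B(R)}) · χ_{ℝ^N ∖ B(M)}‖_{L^q(ℝ^N)} = 0. -/

import Mathlib

open MeasureTheory Filter ENNReal Metric
open Set

lemma lintegral_ball_rpow_lt_top {N : ℕ} {R s : ℝ} (hR : 0 < R) (hs : s < N) :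
    ∫⁻ v in ball (0 : EuclideanSpace ℝ (Fin N)) R, ENNReal.ofReal (‖v‖ ^ (-s)) < ⊤ := by
  rcases le_or_gt s 0 with hs0 | hs0
  · calc ∫⁻ v in ball (0 : EuclideanSpace ℝ (Fin N)) R, ENNReal.ofReal (‖v‖ ^ (-s))
        ≤ ∫⁻ _ in ball (0 : EuclideanSpace ℝ (Fin N)) R, ENNReal.ofReal (R ^ (-s)) := by
          refine setLIntegral_mono' measurableSet_ball fun v hv => ?_
          exact ENNReal.ofReal_le_ofReal (Real.rpow_le_rpow (norm_nonneg v)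
            (le_of_lt (mem_ball_zero_iff.mp hv)) (by linarith))
      _ = ENNReal.ofReal (R ^ (-s)) * volume (ball (0 : EuclideanSpace ℝ (Fin N)) R) :=
          setLIntegral_const _ _
      _ < ⊤ := ENNReal.mul_lt_top ENNReal.ofReal_lt_top measure_ball_lt_top
  · set μ := volume.restrict (ball (0 : EuclideanSpace ℝ (Fin N)) R) with hμ
    have hmeas : Measurable fun v : EuclideanSpace ℝ (Fin N) => ‖v‖ ^ (-s) := by fun_prop
    rw [lintegral_eq_lintegral_meas_le μ
      (Eventually.of_forall fun v => Real.rpow_nonneg (norm_nonneg v) _) hmeas.aemeasurable]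
    have hsetm : ∀ t : ℝ, MeasurableSet {a : EuclideanSpace ℝ (Fin N) | t ≤ ‖a‖ ^ (-s)} :=
      fun t => measurableSet_le measurable_const hmeas
    calc (∫⁻ t in Ioi (0:ℝ), μ {a | t ≤ ‖a‖ ^ (-s)})
        ≤ ∫⁻ t in Ioc (0:ℝ) 1 ∪ Ioi 1, μ {a | t ≤ ‖a‖ ^ (-s)} :=
          lintegral_mono_set Ioi_subset_Ioc_union_Ioi
      _ ≤ (∫⁻ t in Ioc (0:ℝ) 1, μ {a | t ≤ ‖a‖ ^ (-s)})
            + ∫⁻ t in Ioi (1:ℝ), μ {a | t ≤ ‖a‖ ^ (-s)} := lintegral_union_le _ _ _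
      _ < ⊤ := by
        refine ENNReal.add_lt_top.2 ⟨?_, ?_⟩
        · calc (∫⁻ t in Ioc (0:ℝ) 1, μ {a | t ≤ ‖a‖ ^ (-s)})
              ≤ ∫⁻ _ in Ioc (0:ℝ) 1, volume (ball (0 : EuclideanSpace ℝ (Fin N)) R) := by
                refine setLIntegral_mono' measurableSet_Ioc fun t _ => ?_
                rw [hμ, Measure.restrict_apply (hsetm t)]
                exact measure_mono inter_subset_right
            _ = volume (ball (0 : EuclideanSpace ℝ (Fin N)) R) * volume (Ioc (0:ℝ) 1) :=
                setLIntegral_const _ _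
            _ < ⊤ := ENNReal.mul_lt_top measure_ball_lt_top
                (by rw [Real.volume_Ioc]; exact ENNReal.ofReal_lt_top)
        · have hint : ∀ t ∈ Ioi (1:ℝ), μ {a | t ≤ ‖a‖ ^ (-s)}
              ≤ ENNReal.ofReal (t ^ (-((N:ℝ)/s))) * volume (ball (0:EuclideanSpace ℝ (Fin N)) 1) := by
            intro t ht
            have ht0 : (0:ℝ) < t := lt_trans one_pos ht
            have hsub : {a : EuclideanSpace ℝ (Fin N) | t ≤ ‖a‖ ^ (-s)}
                ⊆ closedBall 0 (t ^ (-s)⁻¹) := by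
              intro v hv
              simp only [mem_setOf_eq] at hv
              have hv0 : (0:ℝ) < ‖v‖ := by
                rcases eq_or_lt_of_le (norm_nonneg v) with h | h
                · exfalso
                  rw [← h, Real.zero_rpow (by simpa using hs0.ne')] at hv
                  linarith
                · exact h
              rw [mem_closedBall_zero_iff]
              exact (Real.le_rpow_inv_iff_of_neg hv0 ht0 (by linarith)).mpr hv
            calc μ {a | t ≤ ‖a‖ ^ (-s)}
                ≤ volume (closedBall (0:EuclideanSpace ℝ (Fin N)) (t ^ (-s)⁻¹)) := by
                  rw [hμ, Measure.restrict_apply (hsetm t)]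
                  exact measure_mono (inter_subset_left.trans hsub)
              _ = ENNReal.ofReal ((t ^ (-s)⁻¹) ^ Module.finrank ℝ (EuclideanSpace ℝ (Fin N)))
                    * volume (ball (0:EuclideanSpace ℝ (Fin N)) 1) :=
                  Measure.addHaar_closedBall _ _ (Real.rpow_nonneg ht0.le _)
              _ = ENNReal.ofReal (t ^ (-((N:ℝ)/s)))
                    * volume (ball (0:EuclideanSpace ℝ (Fin N)) 1) := by
                  congr 2
                  rw [finrank_euclideanSpace_fin, ← Real.rpow_natCast (t ^ (-s)⁻¹) N,
                    ← Real.rpow_mul ht0.le]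
                  congr 1
                  rw [inv_neg]
                  field_simp
          calc (∫⁻ t in Ioi (1:ℝ), μ {a | t ≤ ‖a‖ ^ (-s)})
              ≤ ∫⁻ t in Ioi (1:ℝ), ENNReal.ofReal (t ^ (-((N:ℝ)/s)))
                  * volume (ball (0:EuclideanSpace ℝ (Fin N)) 1) :=
                setLIntegral_mono' measurableSet_Ioi hint
            _ = (∫⁻ t in Ioi (1:ℝ), ENNReal.ofReal (t ^ (-((N:ℝ)/s))))
                  * volume (ball (0:EuclideanSpace ℝ (Fin N)) 1) :=
                lintegral_mul_const' _ _ measure_ball_lt_top.ne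
            _ < ⊤ := ENNReal.mul_lt_top
                ((integrableOn_Ioi_rpow_of_lt
                  (neg_lt_neg ((one_lt_div hs0).mpr hs)) one_pos).setLIntegral_lt_top)
                measure_ball_lt_top

lemma lintegral_tail_rpow_lt_top {N : ℕ} {τ : ℝ} (hτ : (N:ℝ) < τ) :
    ∫⁻ u in (ball (0 : EuclideanSpace ℝ (Fin N)) 1)ᶜ, ENNReal.ofReal (‖u‖ ^ (-τ)) < ⊤ := by
  calc ∫⁻ u in (ball (0 : EuclideanSpace ℝ (Fin N)) 1)ᶜ, ENNReal.ofReal (‖u‖ ^ (-τ))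
      ≤ ∫⁻ u in (ball (0:EuclideanSpace ℝ (Fin N)) 1)ᶜ,
          ENNReal.ofReal (2 ^ τ * (1 + ‖u‖) ^ (-τ)) := by
        refine setLIntegral_mono' measurableSet_ball.compl fun u hu => ?_
        have hu1 : 1 ≤ ‖u‖ := by
          simpa [mem_ball_zero_iff, not_lt] using hu
        refine ENNReal.ofReal_le_ofReal ?_
        have h2 : (2:ℝ) ^ τ * (2 * ‖u‖) ^ (-τ) = ‖u‖ ^ (-τ) := by
          rw [Real.mul_rpow (by norm_num) (norm_nonneg u), ← mul_assoc,
            ← Real.rpow_add two_pos, add_neg_cancel, Real.rpow_zero, one_mul]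
        calc ‖u‖ ^ (-τ) = 2 ^ τ * (2 * ‖u‖) ^ (-τ) := h2.symm
          _ ≤ 2 ^ τ * (1 + ‖u‖) ^ (-τ) := by
              refine mul_le_mul_of_nonneg_left ?_ (Real.rpow_nonneg (by norm_num) τ)
              exact Real.rpow_le_rpow_of_nonpos (by linarith) (by linarith) (by linarith)
    _ ≤ ∫⁻ u, ENNReal.ofReal (2 ^ τ * (1 + ‖u‖) ^ (-τ)) := setLIntegral_le_lintegral _ _
    _ = ENNReal.ofReal (2^τ) * ∫⁻ u, ENNReal.ofReal ((1 + ‖u‖) ^ (-τ)) := by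
        have h3 : ∀ u : EuclideanSpace ℝ (Fin N), ENNReal.ofReal (2 ^ τ * (1 + ‖u‖) ^ (-τ))
            = ENNReal.ofReal (2^τ) * ENNReal.ofReal ((1 + ‖u‖) ^ (-τ)) :=
          fun u => ENNReal.ofReal_mul (Real.rpow_nonneg (by norm_num) τ)
        simp_rw [h3]
        exact lintegral_const_mul' _ _ ENNReal.ofReal_ne_top
    _ < ⊤ := ENNReal.mul_lt_top ENNReal.ofReal_lt_top
        (finite_integral_one_add_norm (by rw [finrank_euclideanSpace_fin]; exact hτ))

lemma lintegral_tail_rpow_bound {N : ℕ} {σ δ τ M : ℝ} (hδ : 0 ≤ δ) (hsum : σ = δ + τ)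
    (hM : 1 ≤ M) :
    ∫⁻ u in (ball (0 : EuclideanSpace ℝ (Fin N)) M)ᶜ, ENNReal.ofReal (‖u‖ ^ (-σ))
      ≤ ENNReal.ofReal (M ^ (-δ)) *
        ∫⁻ u in (ball (0 : EuclideanSpace ℝ (Fin N)) 1)ᶜ, ENNReal.ofReal (‖u‖ ^ (-τ)) := by
  have hM0 : (0:ℝ) < M := lt_of_lt_of_le one_pos hM
  calc ∫⁻ u in (ball (0 : EuclideanSpace ℝ (Fin N)) M)ᶜ, ENNReal.ofReal (‖u‖ ^ (-σ))
      ≤ ∫⁻ u in (ball (0 : EuclideanSpace ℝ (Fin N)) M)ᶜ,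
          ENNReal.ofReal (M ^ (-δ)) * ENNReal.ofReal (‖u‖ ^ (-τ)) := by
        refine setLIntegral_mono' measurableSet_ball.compl fun u hu => ?_
        have huM : M ≤ ‖u‖ := by simpa [mem_ball_zero_iff, not_lt] using hu
        have hu0 : (0:ℝ) < ‖u‖ := lt_of_lt_of_le hM0 huM
        rw [← ENNReal.ofReal_mul (Real.rpow_nonneg hM0.le _)]
        refine ENNReal.ofReal_le_ofReal ?_
        have hsplit : ‖u‖ ^ (-σ) = ‖u‖ ^ (-δ) * ‖u‖ ^ (-τ) := by
          rw [← Real.rpow_add hu0]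
          congr 1
          rw [hsum]; ring
        rw [hsplit]
        exact mul_le_mul_of_nonneg_right
          (Real.rpow_le_rpow_of_nonpos hM0 huM (by linarith))
          (Real.rpow_nonneg (norm_nonneg u) _)
    _ = ENNReal.ofReal (M ^ (-δ)) *
          ∫⁻ u in (ball (0 : EuclideanSpace ℝ (Fin N)) M)ᶜ, ENNReal.ofReal (‖u‖ ^ (-τ)) :=
        lintegral_const_mul' _ _ ENNReal.ofReal_ne_top
    _ ≤ _ := mul_le_mul_right
        (lintegral_mono_set (compl_subset_compl.mpr (ball_subset_ball hM))) _


/-- The Stein–Weiss operator `Sg(u) = ∫ g(v) / (|u|^α |u−v|^λ |v|^β) dv` on `ℝ^N`. -/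
noncomputable def steinWeiss {N : ℕ} (α β lam : ℝ) (g : EuclideanSpace ℝ (Fin N) → ℝ)
    (u : EuclideanSpace ℝ (Fin N)) : ℝ :=
  ∫ v, g v / (‖u‖ ^ α * ‖u - v‖ ^ lam * ‖v‖ ^ β)

/-- **Uniform decay of the image of compactly supported functions** (the paper's estimates
(2.5)–(2.6), Euclidean case). Let `N ≥ 1`, `1 < p ≤ q < ∞`, `0 < λ < N`, `β < N/p′` and
`(α + λ) q > N`. Then for every fixed `R > 0`,
`lim_{M→∞} sup_{‖f‖_p ≤ 1} ‖S(f χ_{B(R)}) χ_{ℝ^N ∖ B(M)}‖_q = 0`. -/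
theorem steinWeiss_uniform_decay (N : ℕ) (hN : 1 ≤ N) (p q lam α β p' : ℝ)
    (hp : 1 < p) (hpq : p ≤ q) (hp' : p' = p / (p - 1))
    (hlam0 : 0 < lam) (hlamN : lam < N) (hβ : β < N / p') (halamq : (N : ℝ) < (α + lam) * q) :
    ∀ R > (0 : ℝ),
      Tendsto (fun M : ℝ =>
          ⨆ (f : EuclideanSpace ℝ (Fin N) → ℝ)
            (_ : MemLp f (ENNReal.ofReal p) volume ∧
                 eLpNorm f (ENNReal.ofReal p) volume ≤ 1),
            eLpNorm
              ((Metric.ball (0 : EuclideanSpace ℝ (Fin N)) M)ᶜ.indicator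
                (steinWeiss α β lam ((Metric.ball (0 : EuclideanSpace ℝ (Fin N)) R).indicator f)))
              (ENNReal.ofReal q) volume)
        atTop (nhds 0) := by
  intro R hR
  -- basic numerology
  have hp0 : (0:ℝ) < p := lt_trans one_pos hp
  have hq1 : (1:ℝ) < q := lt_of_lt_of_le hp hpq
  have hq0 : (0:ℝ) < q := lt_trans one_pos hq1
  have hN1 : (1:ℝ) ≤ N := by exact_mod_cast hN
  have hp'0 : (0:ℝ) < p' := by rw [hp']; exact div_pos hp0 (by linarith)
  have hconj : p.HolderConjugate p' := by rw [hp']; exact Real.HolderConjugate.conjExponent hp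
  have hβp' : β * p' < N := (lt_div_iff₀ hp'0).mp hβ
  have ht0 : (0:ℝ) < α + lam := by
    by_contra h
    push_neg at h
    nlinarith [mul_nonneg (neg_nonneg.mpr h) hq0.le]
  set σ : ℝ := (α + lam) * q with hσdef
  have hσN : (N:ℝ) < σ := halamq
  set δ : ℝ := (σ - N) / 2 with hδdef
  set τ : ℝ := (σ + N) / 2 with hτdef
  have hδ0 : 0 < δ := by rw [hδdef]; linarith
  have hτN : (N:ℝ) < τ := by rw [hτdef]; linarith
  have hsum : σ = δ + τ := by rw [hδdef, hτdef]; ring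
  -- the tail integral constant
  set L : ℝ≥0∞ := ∫⁻ u in (ball (0 : EuclideanSpace ℝ (Fin N)) 1)ᶜ,
      ENNReal.ofReal (‖u‖ ^ (-τ)) with hLdef
  have hLtop : L < ⊤ := lintegral_tail_rpow_lt_top hτN
  -- the Hölder constant
  set W : EuclideanSpace ℝ (Fin N) → ℝ :=
    (ball (0 : EuclideanSpace ℝ (Fin N)) R).indicator (fun v => ‖v‖ ^ (-β)) with hWdef
  have hWnn : ∀ v, 0 ≤ W v :=
    fun v => indicator_nonneg (fun v _ => Real.rpow_nonneg (norm_nonneg v) _) v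
  have hWm : Measurable W := by
    have : Measurable fun v : EuclideanSpace ℝ (Fin N) => ‖v‖ ^ (-β) := by fun_prop
    exact this.indicator measurableSet_ball
  set KW : ℝ≥0∞ := (∫⁻ v, ENNReal.ofReal (W v) ^ p') ^ (1/p') with hKWdef
  have hKWtop : KW < ⊤ := by
    have hpt : ∀ v, ENNReal.ofReal (W v) ^ p'
        = (ball (0 : EuclideanSpace ℝ (Fin N)) R).indicator
            (fun v => ENNReal.ofReal (‖v‖ ^ (-(β * p')))) v := by
      intro v
      by_cases hv : v ∈ ball (0 : EuclideanSpace ℝ (Fin N)) R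
      · rw [hWdef]
        simp only [indicator_of_mem hv]
        rw [ENNReal.ofReal_rpow_of_nonneg (Real.rpow_nonneg (norm_nonneg v) _) hp'0.le,
          ← Real.rpow_mul (norm_nonneg v), neg_mul]
      · rw [hWdef]
        simp only [indicator_of_notMem hv]
        rw [ENNReal.ofReal_zero, ENNReal.zero_rpow_of_pos hp'0]
    rw [hKWdef]
    simp_rw [hpt]
    rw [lintegral_indicator measurableSet_ball]
    exact ENNReal.rpow_lt_top_of_nonneg (by positivity)
      (lintegral_ball_rpow_lt_top hR hβp').ne
  set c0 : ℝ≥0∞ := ENNReal.ofReal (2 ^ lam) * KW with hc0def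
  have hc0top : c0 ≠ ⊤ := by
    rw [hc0def]
    exact (ENNReal.mul_lt_top ENNReal.ofReal_lt_top hKWtop).ne
  -- the tail eLpNorm, rewritten as a set lintegral
  have hD : ∀ M : ℝ,
      eLpNorm ((ball (0 : EuclideanSpace ℝ (Fin N)) M)ᶜ.indicator
          (fun u => ‖u‖ ^ (-(α + lam)))) (ENNReal.ofReal q) volume
        = (∫⁻ u in (ball (0 : EuclideanSpace ℝ (Fin N)) M)ᶜ,
            ENNReal.ofReal (‖u‖ ^ (-σ))) ^ (1/q) := by
    intro M
    rw [eLpNorm_eq_lintegral_rpow_enorm_toReal (ENNReal.ofReal_pos.mpr hq0).ne'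
      ENNReal.ofReal_ne_top, ENNReal.toReal_ofReal hq0.le]
    congr 1
    have hpt : ∀ u, ‖(ball (0 : EuclideanSpace ℝ (Fin N)) M)ᶜ.indicator
        (fun u => ‖u‖ ^ (-(α + lam))) u‖ₑ ^ q
        = (ball (0 : EuclideanSpace ℝ (Fin N)) M)ᶜ.indicator
            (fun u => ENNReal.ofReal (‖u‖ ^ (-σ))) u := by
      intro u
      by_cases hu : u ∈ (ball (0 : EuclideanSpace ℝ (Fin N)) M)ᶜ
      · simp only [indicator_of_mem hu]
        rw [Real.enorm_eq_ofReal (Real.rpow_nonneg (norm_nonneg u) _),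
          ENNReal.ofReal_rpow_of_nonneg (Real.rpow_nonneg (norm_nonneg u) _) hq0.le,
          ← Real.rpow_mul (norm_nonneg u)]
        congr 2
        rw [hσdef]; ring
      · simp only [indicator_of_notMem hu]
        rw [enorm_zero, ENNReal.zero_rpow_of_pos hq0]
    simp_rw [hpt]
    rw [lintegral_indicator measurableSet_ball.compl]
  -- the per-f estimate
  have key : ∀ M : ℝ, 1 ≤ M → 2 * R ≤ M →
      ∀ f : EuclideanSpace ℝ (Fin N) → ℝ,
        MemLp f (ENNReal.ofReal p) volume → eLpNorm f (ENNReal.ofReal p) volume ≤ 1 →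
        eLpNorm ((ball (0 : EuclideanSpace ℝ (Fin N)) M)ᶜ.indicator
            (steinWeiss α β lam ((ball (0 : EuclideanSpace ℝ (Fin N)) R).indicator f)))
            (ENNReal.ofReal q) volume
          ≤ c0 * (∫⁻ u in (ball (0 : EuclideanSpace ℝ (Fin N)) M)ᶜ,
              ENNReal.ofReal (‖u‖ ^ (-σ))) ^ (1/q) := by
    intro M hM1 hM2R f hfm hf1
    set g : EuclideanSpace ℝ (Fin N) → ℝ :=
      (ball (0 : EuclideanSpace ℝ (Fin N)) R).indicator f with hgdef
    have hgm : AEStronglyMeasurable g volume :=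
      hfm.aestronglyMeasurable.indicator measurableSet_ball
    set A : ℝ≥0∞ := ∫⁻ v, (‖g v‖₊ : ℝ≥0∞) * ENNReal.ofReal (W v) with hAdef
    -- Hölder
    have hA : A ≤ KW := by
      have hld := ENNReal.lintegral_mul_le_Lp_mul_Lq volume hconj
        hgm.enorm (hWm.ennreal_ofReal.aemeasurable)
      have heq : (∫⁻ v, ((‖g v‖₊ : ℝ≥0∞)) ^ p) ^ (1/p)
          = eLpNorm g (ENNReal.ofReal p) volume := by
        rw [eLpNorm_eq_lintegral_rpow_enorm_toReal (ENNReal.ofReal_pos.mpr hp0).ne'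
          ENNReal.ofReal_ne_top, ENNReal.toReal_ofReal hp0.le]
        rfl
      calc A ≤ (∫⁻ v, ((‖g v‖₊ : ℝ≥0∞)) ^ p) ^ (1/p)
            * (∫⁻ v, ENNReal.ofReal (W v) ^ p') ^ (1/p') := hld
        _ = eLpNorm g (ENNReal.ofReal p) volume * KW := by rw [heq, hKWdef]
        _ ≤ 1 * KW := by
            exact mul_le_mul_left (le_trans (eLpNorm_indicator_le f) hf1) KW
        _ = KW := one_mul KW
    have hAtop : A < ⊤ := lt_of_le_of_lt hA hKWtop
    have hofReal : ∀ v, ENNReal.ofReal (‖g v‖ * W v)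
        = (‖g v‖₊ : ℝ≥0∞) * ENNReal.ofReal (W v) := fun v => by
      rw [ENNReal.ofReal_mul (norm_nonneg _), ofReal_norm_eq_enorm, enorm_eq_nnnorm]
    -- integrability of the majorant
    have hInt : Integrable (fun v => ‖g v‖ * W v) volume := by
      refine ⟨(hgm.norm.mul hWm.aestronglyMeasurable), ?_⟩
      rw [hasFiniteIntegral_iff_norm]
      have h4 : ∀ v, ENNReal.ofReal ‖‖g v‖ * W v‖
          = (‖g v‖₊ : ℝ≥0∞) * ENNReal.ofReal (W v) := fun v => by
        rw [Real.norm_eq_abs, abs_of_nonneg (mul_nonneg (norm_nonneg _) (hWnn v)), hofReal v]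
      simp_rw [h4]
      exact hAtop
    set Creal : ℝ := 2 ^ lam * ∫ v, ‖g v‖ * W v with hCdef
    have hIP : ∫ v, ‖g v‖ * W v = A.toReal := by
      rw [integral_eq_lintegral_of_nonneg_ae
        (Eventually.of_forall fun v => mul_nonneg (norm_nonneg _) (hWnn v))
        (hgm.norm.mul hWm.aestronglyMeasurable)]
      congr 1
      simp_rw [hofReal, hAdef]
    have hCnn : 0 ≤ Creal := by
      rw [hCdef, hIP]
      positivity
    have hCle : ENNReal.ofReal Creal ≤ c0 := by
      rw [hCdef, ENNReal.ofReal_mul (by positivity), hc0def]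
      refine mul_le_mul_right ?_ _
      rw [hIP]
      exact le_trans ENNReal.ofReal_toReal_le hA
    -- pointwise estimate
    have hpt : ∀ u, ‖(ball (0 : EuclideanSpace ℝ (Fin N)) M)ᶜ.indicator
        (steinWeiss α β lam g) u‖
        ≤ ‖(Creal • (ball (0 : EuclideanSpace ℝ (Fin N)) M)ᶜ.indicator
            (fun u => ‖u‖ ^ (-(α + lam)))) u‖ := by
      intro u
      by_cases hu : u ∈ (ball (0 : EuclideanSpace ℝ (Fin N)) M)ᶜ
      · have huM : M ≤ ‖u‖ := by
          simpa [mem_ball_zero_iff, not_lt] using hu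
        have hu0 : (0:ℝ) < ‖u‖ := lt_of_lt_of_le (lt_of_lt_of_le one_pos hM1) huM
        have h2R : 2 * R ≤ ‖u‖ := le_trans hM2R huM
        rw [indicator_of_mem hu, Pi.smul_apply, indicator_of_mem hu, smul_eq_mul]
        refine le_trans ?_ (le_abs_self _)
        -- pointwise in v
        have hptv : ∀ v, ‖g v / (‖u‖ ^ α * ‖u - v‖ ^ lam * ‖v‖ ^ β)‖
            ≤ (2 ^ lam * ‖u‖ ^ (-(α + lam))) * (‖g v‖ * W v) := by
          intro v
          by_cases hv : v ∈ ball (0 : EuclideanSpace ℝ (Fin N)) R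
          · have hvR : ‖v‖ < R := mem_ball_zero_iff.mp hv
            have huv : ‖u‖ / 2 ≤ ‖u - v‖ := by
              have h5 := norm_sub_norm_le u v
              linarith
            have huv0 : (0:ℝ) < ‖u - v‖ := lt_of_lt_of_le (by linarith) huv
            have hkey : (‖u‖ ^ α * ‖u - v‖ ^ lam)⁻¹ ≤ 2 ^ lam * ‖u‖ ^ (-(α + lam)) := by
              have h5 : (‖u‖ / 2) ^ lam = ‖u‖ ^ lam * 2 ^ (-lam) := by
                rw [Real.div_rpow (norm_nonneg u) (by norm_num : (0:ℝ) ≤ 2),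
                  Real.rpow_neg (by norm_num : (0:ℝ) ≤ 2), div_eq_mul_inv]
              have h6 : (‖u‖ / 2) ^ lam ≤ ‖u - v‖ ^ lam :=
                Real.rpow_le_rpow (by positivity) huv hlam0.le
              have hd : 2 ^ (-lam) * ‖u‖ ^ (α + lam) ≤ ‖u‖ ^ α * ‖u - v‖ ^ lam := by
                rw [Real.rpow_add hu0]
                calc 2 ^ (-lam) * (‖u‖ ^ α * ‖u‖ ^ lam)
                    = ‖u‖ ^ α * ((‖u‖ / 2) ^ lam) := by rw [h5]; ring
                  _ ≤ ‖u‖ ^ α * ‖u - v‖ ^ lam :=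
                    mul_le_mul_of_nonneg_left h6 (Real.rpow_nonneg (norm_nonneg u) α)
              have hdpos : (0:ℝ) < 2 ^ (-lam) * ‖u‖ ^ (α + lam) := by positivity
              calc (‖u‖ ^ α * ‖u - v‖ ^ lam)⁻¹
                  ≤ (2 ^ (-lam) * ‖u‖ ^ (α + lam))⁻¹ := by
                    exact inv_anti₀ hdpos hd
                _ = 2 ^ lam * ‖u‖ ^ (-(α + lam)) := by
                    rw [mul_inv, ← Real.rpow_neg (by norm_num : (0:ℝ) ≤ 2), neg_neg,
                      ← Real.rpow_neg (norm_nonneg u)]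
            have hW : W v = ‖v‖ ^ (-β) := by rw [hWdef]; exact indicator_of_mem hv _
            have hden : (0:ℝ) ≤ ‖u‖ ^ α * ‖u - v‖ ^ lam * ‖v‖ ^ β := by positivity
            rw [norm_div, Real.norm_eq_abs (‖u‖ ^ α * ‖u - v‖ ^ lam * ‖v‖ ^ β),
              abs_of_nonneg hden, hW, div_eq_mul_inv, mul_inv,
              ← Real.rpow_neg (norm_nonneg v)]
            calc ‖g v‖ * ((‖u‖ ^ α * ‖u - v‖ ^ lam)⁻¹ * ‖v‖ ^ (-β))
                ≤ ‖g v‖ * ((2 ^ lam * ‖u‖ ^ (-(α + lam))) * ‖v‖ ^ (-β)) :=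
                  mul_le_mul_of_nonneg_left
                    (mul_le_mul_of_nonneg_right hkey (Real.rpow_nonneg (norm_nonneg v) _))
                    (norm_nonneg _)
              _ = (2 ^ lam * ‖u‖ ^ (-(α + lam))) * (‖g v‖ * ‖v‖ ^ (-β)) := by ring
          · have hg0 : g v = 0 := by rw [hgdef]; exact indicator_of_notMem hv f
            rw [hg0]
            simp [mul_nonneg, hWnn v]
        calc ‖steinWeiss α β lam g u‖
            ≤ ∫ v, ‖g v / (‖u‖ ^ α * ‖u - v‖ ^ lam * ‖v‖ ^ β)‖ :=
              norm_integral_le_integral_norm _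
          _ ≤ ∫ v, (2 ^ lam * ‖u‖ ^ (-(α + lam))) * (‖g v‖ * W v) :=
              integral_mono_of_nonneg (Eventually.of_forall fun v => norm_nonneg _)
                (hInt.const_mul _) (Eventually.of_forall hptv)
          _ = Creal * ‖u‖ ^ (-(α + lam)) := by
              rw [integral_const_mul, hCdef]; ring
      · rw [indicator_of_notMem hu, norm_zero]
        exact norm_nonneg _
    -- combine
    calc eLpNorm ((ball (0 : EuclideanSpace ℝ (Fin N)) M)ᶜ.indicator
          (steinWeiss α β lam g)) (ENNReal.ofReal q) volume
        ≤ eLpNorm (Creal • (ball (0 : EuclideanSpace ℝ (Fin N)) M)ᶜ.indicator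
            (fun u => ‖u‖ ^ (-(α + lam)))) (ENNReal.ofReal q) volume := eLpNorm_mono hpt
      _ = ‖Creal‖ₑ * eLpNorm ((ball (0 : EuclideanSpace ℝ (Fin N)) M)ᶜ.indicator
            (fun u => ‖u‖ ^ (-(α + lam)))) (ENNReal.ofReal q) volume :=
          eLpNorm_const_smul _ _ _ _
      _ ≤ c0 * (∫⁻ u in (ball (0 : EuclideanSpace ℝ (Fin N)) M)ᶜ,
            ENNReal.ofReal (‖u‖ ^ (-σ))) ^ (1/q) := by
          rw [hD M]
          refine mul_le_mul_left ?_ _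
          rw [Real.enorm_eq_ofReal hCnn]
          exact hCle
  -- the squeeze
  have hub : Tendsto (fun M : ℝ => c0 * (ENNReal.ofReal (M ^ (-δ)) * L) ^ (1/q))
      atTop (nhds 0) := by
    have h1 : Tendsto (fun M : ℝ => ENNReal.ofReal (M ^ (-δ))) atTop (nhds 0) := by
      have := ENNReal.tendsto_ofReal (tendsto_rpow_neg_atTop hδ0)
      simpa using this
    have h2 : Tendsto (fun M : ℝ => ENNReal.ofReal (M ^ (-δ)) * L) atTop (nhds 0) := by
      have := ENNReal.Tendsto.mul_const h1 (Or.inr hLtop.ne)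
      simpa using this
    have h3 : Tendsto (fun M : ℝ => (ENNReal.ofReal (M ^ (-δ)) * L) ^ (1/q))
        atTop (nhds 0) := by
      have hcont : ContinuousAt (fun x : ℝ≥0∞ => x ^ (1/q)) 0 :=
        (ENNReal.continuous_rpow_const).continuousAt
      have h4 : Tendsto (fun M : ℝ => (ENNReal.ofReal (M ^ (-δ)) * L) ^ (1/q))
          atTop (nhds ((0:ℝ≥0∞) ^ (1/q))) := hcont.tendsto.comp h2
      rwa [ENNReal.zero_rpow_of_pos (by positivity : (0:ℝ) < 1/q)] at h4
    have := ENNReal.Tendsto.const_mul h3 (Or.inr hc0top)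
    simpa using this
  refine tendsto_of_tendsto_of_tendsto_of_le_of_le' tendsto_const_nhds hub
    (Eventually.of_forall fun M => zero_le) ?_
  filter_upwards [eventually_ge_atTop (1:ℝ), eventually_ge_atTop (2*R)] with M hM1 hM2R
  refine iSup_le fun f => iSup_le fun hf => ?_
  calc eLpNorm ((ball (0 : EuclideanSpace ℝ (Fin N)) M)ᶜ.indicator
        (steinWeiss α β lam ((ball (0 : EuclideanSpace ℝ (Fin N)) R).indicator f)))
        (ENNReal.ofReal q) volume
      ≤ c0 * (∫⁻ u in (ball (0 : EuclideanSpace ℝ (Fin N)) M)ᶜ,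
          ENNReal.ofReal (‖u‖ ^ (-σ))) ^ (1/q) := key M hM1 hM2R f hf.1 hf.2
    _ ≤ c0 * (ENNReal.ofReal (M ^ (-δ)) * L) ^ (1/q) := by
        refine mul_le_mul_right (ENNReal.rpow_le_rpow ?_ (by positivity)) _
        exact lintegral_tail_rpow_bound hδ0.le hsum hM1
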